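/- The map M₁ y = A₁ y/(1 + ⟨φ₁, y⟩) with A₁ = [[1,-2,-2],[-2,-3,-6],[0,-2,-3]] and φ₁ = (4,-4,0) has a fixed point y* with y*₁ > 0, y*₂ < 0, y*₃ > 0 (i.e., in the open octant (+,-,+)). -/

import Mathlib

open Matrix

/-- The cubic `t^3 + 5t^2 - 13t - 1` has a root in `[1.9, 2]`. -/
lemma cubic_root_exists : ∃ l : ℝ, l ∈ Set.Icc (1.9:ℝ) 2 ∧ l^3 + 5*l^2 - 13*l - 1 = 0 := by
  have hc : ContinuousOn (fun t : ℝ => t^3 + 5*t^2 - 13*t - 1) (Set.Icc (1.9:ℝ) 2) := by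
    fun_prop
  have h := intermediate_value_Icc (by norm_num : (1.9:ℝ) ≤ 2) hc
  have h0 : (0:ℝ) ∈ Set.Icc ((1.9:ℝ)^3 + 5*(1.9:ℝ)^2 - 13*1.9 - 1)
      ((2:ℝ)^3 + 5*(2:ℝ)^2 - 13*2 - 1) := by
    constructor <;> norm_num
  obtain ⟨l, hl, hl0⟩ := h h0
  exact ⟨l, hl, hl0⟩

/-- The map `M₁ y = A₁ y/(1 + ⟨φ₁, y⟩)` with
`A₁ = [[1,-2,-2],[-2,-3,-6],[0,-2,-3]]` and `φ₁ = (4,-4,0)` has a fixed point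
in the open octant `(+,-,+)`. -/
theorem M1_fixed_point_octant
    (M₁ : (Fin 3 → ℝ) → (Fin 3 → ℝ))
    (hM : ∀ y, M₁ y = (1 + ![(4:ℝ), -4, 0] ⬝ᵥ y)⁻¹ •
      (!![(1:ℝ), -2, -2; -2, -3, -6; 0, -2, -3]).mulVec y) :
    ∃ y : Fin 3 → ℝ, 1 + ![(4:ℝ), -4, 0] ⬝ᵥ y ≠ 0 ∧ M₁ y = y ∧
      y 0 > 0 ∧ y 1 < 0 ∧ y 2 > 0 := by
  obtain ⟨l, ⟨hl1, hl2⟩, hp⟩ := cubic_root_exists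
  set D : ℝ := 2*l^2 + 8*l - 2 with hD
  have hDpos : 0 < D := by nlinarith
  have hDne : D ≠ 0 := ne_of_gt hDpos
  have hlm1 : (0:ℝ) < l - 1 := by linarith
  set y : Fin 3 → ℝ := ![(1+l)*(l-1)/D, -((3+l)*(l-1)^2)/(2*D), (l-1)^2/D] with hy
  have hdot : ![(4:ℝ), -4, 0] ⬝ᵥ y = l - 1 := by
    simp only [hy, dotProduct, Fin.sum_univ_three, Matrix.cons_val_zero,
      Matrix.cons_val_one, Matrix.head_cons, Matrix.cons_val_two, Matrix.tail_cons]
    field_simp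
    ring
  have hden : 1 + ![(4:ℝ), -4, 0] ⬝ᵥ y = l := by rw [hdot]; ring
  have hlne : l ≠ 0 := by positivity
  refine ⟨y, by rw [hden]; exact hlne, ?_, ?_, ?_, ?_⟩
  · rw [hM, hden]
    funext i
    fin_cases i <;>
        simp only [Pi.smul_apply, smul_eq_mul, Matrix.mulVec, dotProduct,
          Fin.sum_univ_three, hy, Matrix.cons_val_zero, Matrix.cons_val_one,
          Matrix.head_cons, Matrix.cons_val_two, Matrix.tail_cons, Matrix.of_apply,
          Matrix.cons_val', Matrix.empty_val', Matrix.cons_val_fin_one,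
          Matrix.head_fin_const, Fin.zero_eta, Fin.mk_one, Fin.reduceFinMk] <;>
        field_simp
    · ring
    · linear_combination hp
    · ring
  · have : 0 < (1+l)*(l-1)/D := by positivity
    simpa [hy] using this
  · have : 0 < ((3+l)*(l-1)^2)/(2*D) := by positivity
    have h2 : -((3+l)*(l-1)^2)/(2*D) < 0 := by
      rw [neg_div]; linarith
    simpa [hy] using h2
  · have : 0 < (l-1)^2/D := by positivity
    simpa [hy] using this
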